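/- For 2 voters and 3 alternatives, every social welfare function satisfying unanimity and independence of irrelevant alternatives is dictatorial. -/

import Mathlib

/-- Rank function: `a` gets rank 0, `b` rank 1, everything else rank 2. -/
private def rk (a b x : Fin 3) : ℕ := if x = a then 0 else if x = b then 1 else 2

/-- The strict order `a > b > c` (where `c` is the third element). -/
private def mkO (a b : Fin 3) : Fin 3 → Fin 3 → Prop := fun x y => rk a b x < rk a b y

private instance (a b x y : Fin 3) : Decidable (mkO a b x y) :=
  inferInstanceAs (Decidable (_ < _))

private lemma mk_irrefl : ∀ a b x : Fin 3, ¬ mkO a b x x := by decide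

private lemma mk_trans : ∀ a b x y z : Fin 3, mkO a b x y → mkO a b y z → mkO a b x z := by
  decide

private lemma mk_tri : ∀ a b x y : Fin 3, a ≠ b → x ≠ y → mkO a b x y ∨ mkO a b y x := by
  decide

private lemma mk_asym : ∀ a b x y : Fin 3, mkO a b x y → ¬ mkO a b y x := by decide

private lemma mk_facts : ∀ a b c : Fin 3, a ≠ b → a ≠ c → b ≠ c →
    mkO a b a b ∧ mkO a b b c ∧ mkO a b a c := by decide

private lemma mk_self : ∀ a b : Fin 3, a ≠ b → mkO a b a b := by decide

private lemma mkO_sto {a b : Fin 3} (hab : a ≠ b) : IsStrictTotalOrder (Fin 3) (mkO a b) := by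
  refine { trichotomous := ?_, irrefl := mk_irrefl a b, trans := mk_trans a b }
  intro x y
  rcases eq_or_ne x y with h | h
  · exact fun _ _ => h
  · rcases mk_tri a b x y hab h with h' | h'
    · exact fun h1 _ => absurd h' h1
    · exact fun _ h2 => absurd h' h2

/-- For 2 voters and 3 alternatives, every social welfare function satisfying
unanimity and independence of irrelevant alternatives is dictatorial. -/
theorem arrow_two_voters_three_alternatives
    (F : (Fin 2 → Fin 3 → Fin 3 → Prop) → (Fin 3 → Fin 3 → Prop))
    (hF : ∀ π : Fin 2 → Fin 3 → Fin 3 → Prop,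
      (∀ v, IsStrictTotalOrder (Fin 3) (π v)) → IsStrictTotalOrder (Fin 3) (F π))
    (unanimity : ∀ π : Fin 2 → Fin 3 → Fin 3 → Prop,
      (∀ v, IsStrictTotalOrder (Fin 3) (π v)) →
      ∀ a b : Fin 3, (∀ v, π v a b) → F π a b)
    (iia : ∀ π π' : Fin 2 → Fin 3 → Fin 3 → Prop,
      (∀ v, IsStrictTotalOrder (Fin 3) (π v)) → (∀ v, IsStrictTotalOrder (Fin 3) (π' v)) →
      ∀ a b : Fin 3, (∀ v, π v a b ↔ π' v a b) → (F π a b ↔ F π' a b)) :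
    ∃ d : Fin 2, ∀ π : Fin 2 → Fin 3 → Fin 3 → Prop,
      (∀ v, IsStrictTotalOrder (Fin 3) (π v)) →
      ∀ a b : Fin 3, π d a b → F π a b := by
  classical
  -- basic order facts about F
  have Ftot : ∀ π (hπ : ∀ v, IsStrictTotalOrder (Fin 3) (π v)) (a b : Fin 3),
      a ≠ b → ¬ F π a b → F π b a := by
    intro π hπ a b hab h
    rcases (or_iff_not_imp_left.2 fun h1 => or_iff_not_imp_right.2 fun h2 =>
      (hF π hπ).trichotomous a b h1 h2 : F π a b ∨ a = b ∨ F π b a) with h' | h' | h'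
    · exact absurd h' h
    · exact absurd h' hab
    · exact h'
  -- profiles
  have profSTO : ∀ p q : Fin 3 → Fin 3 → Prop, IsStrictTotalOrder (Fin 3) p →
      IsStrictTotalOrder (Fin 3) q → ∀ v : Fin 2, IsStrictTotalOrder (Fin 3) (![p, q] v) := by
    intro p q hp hq v
    fin_cases v
    · exact hp
    · exact hq
  -- decisiveness of voter 0 resp. voter 1 on the pair (a, b)
  set D0 : Fin 3 → Fin 3 → Prop := fun a b => F ![mkO a b, mkO b a] a b with hD0
  set D1 : Fin 3 → Fin 3 → Prop := fun a b => F ![mkO b a, mkO a b] a b with hD1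
  -- transfer lemmas
  have tr0 : ∀ π (hπ : ∀ v, IsStrictTotalOrder (Fin 3) (π v)) (a b : Fin 3), a ≠ b →
      π 0 a b → π 1 b a → (F π a b ↔ D0 a b) := by
    intro π hπ a b hab h0 h1
    refine iia π ![mkO a b, mkO b a] hπ
      (profSTO _ _ (mkO_sto hab) (mkO_sto hab.symm)) a b ?_
    intro v
    fin_cases v
    · exact iff_of_true h0 (mk_self a b hab)
    · exact iff_of_false (fun h => (hπ 1).irrefl a ((hπ 1).trans a b a h h1))
        (mk_asym b a b a (mk_self b a hab.symm))
  have tr1 : ∀ π (hπ : ∀ v, IsStrictTotalOrder (Fin 3) (π v)) (a b : Fin 3), a ≠ b →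
      π 1 a b → π 0 b a → (F π a b ↔ D1 a b) := by
    intro π hπ a b hab h1 h0
    refine iia π ![mkO b a, mkO a b] hπ
      (profSTO _ _ (mkO_sto hab.symm) (mkO_sto hab)) a b ?_
    intro v
    fin_cases v
    · exact iff_of_false (fun h => (hπ 0).irrefl a ((hπ 0).trans a b a h h0))
        (mk_asym b a b a (mk_self b a hab.symm))
    · exact iff_of_true h1 (mk_self a b hab)
  -- spreading lemmas for voter 0
  have spread0L : ∀ a b c : Fin 3, a ≠ b → a ≠ c → b ≠ c → D0 a b → D0 a c := by
    intro a b c hab hac hbc hD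
    obtain ⟨f1, f2, f3⟩ := mk_facts a b c hab hac hbc
    obtain ⟨g1, g2, g3⟩ := mk_facts b c a hbc (fun h => hab h.symm) (fun h => hac h.symm)
    set π : Fin 2 → Fin 3 → Fin 3 → Prop := ![mkO a b, mkO b c] with hπdef
    have hπ : ∀ v, IsStrictTotalOrder (Fin 3) (π v) :=
      profSTO _ _ (mkO_sto hab) (mkO_sto hbc)
    have hab' : F π a b := (tr0 π hπ a b hab f1 g3).mpr hD
    have hbc' : F π b c := unanimity π hπ b c (by
      intro v; fin_cases v
      · exact f2
      · exact g1)
    have hac' : F π a c := (hF π hπ).trans a b c hab' hbc'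
    exact (tr0 π hπ a c hac f3 g2).mp hac'
  have spread0R : ∀ a b c : Fin 3, a ≠ b → a ≠ c → b ≠ c → D0 a b → D0 c b := by
    intro a b c hab hac hbc hD
    obtain ⟨f1, f2, f3⟩ := mk_facts c a b (fun h => hac h.symm) (fun h => hbc h.symm) hab
    obtain ⟨g1, g2, g3⟩ := mk_facts b c a hbc (fun h => hab h.symm) (fun h => hac h.symm)
    set π : Fin 2 → Fin 3 → Fin 3 → Prop := ![mkO c a, mkO b c] with hπdef
    have hπ : ∀ v, IsStrictTotalOrder (Fin 3) (π v) :=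
      profSTO _ _ (mkO_sto (fun h => hac h.symm)) (mkO_sto hbc)
    have hca' : F π c a := unanimity π hπ c a (by
      intro v; fin_cases v
      · exact f1
      · exact g2)
    have hab' : F π a b := (tr0 π hπ a b hab f2 g3).mpr hD
    have hcb' : F π c b := (hF π hπ).trans c a b hca' hab'
    exact (tr0 π hπ c b (fun h => hbc h.symm) f3 g1).mp hcb'
  -- spreading lemmas for voter 1 (symmetric)
  have spread1L : ∀ a b c : Fin 3, a ≠ b → a ≠ c → b ≠ c → D1 a b → D1 a c := by
    intro a b c hab hac hbc hD
    obtain ⟨f1, f2, f3⟩ := mk_facts a b c hab hac hbc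
    obtain ⟨g1, g2, g3⟩ := mk_facts b c a hbc (fun h => hab h.symm) (fun h => hac h.symm)
    set π : Fin 2 → Fin 3 → Fin 3 → Prop := ![mkO b c, mkO a b] with hπdef
    have hπ : ∀ v, IsStrictTotalOrder (Fin 3) (π v) :=
      profSTO _ _ (mkO_sto hbc) (mkO_sto hab)
    have hab' : F π a b := (tr1 π hπ a b hab f1 g3).mpr hD
    have hbc' : F π b c := unanimity π hπ b c (by
      intro v; fin_cases v
      · exact g1
      · exact f2)
    have hac' : F π a c := (hF π hπ).trans a b c hab' hbc'
    exact (tr1 π hπ a c hac f3 g2).mp hac'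
  have spread1R : ∀ a b c : Fin 3, a ≠ b → a ≠ c → b ≠ c → D1 a b → D1 c b := by
    intro a b c hab hac hbc hD
    obtain ⟨f1, f2, f3⟩ := mk_facts c a b (fun h => hac h.symm) (fun h => hbc h.symm) hab
    obtain ⟨g1, g2, g3⟩ := mk_facts b c a hbc (fun h => hab h.symm) (fun h => hac h.symm)
    set π : Fin 2 → Fin 3 → Fin 3 → Prop := ![mkO b c, mkO c a] with hπdef
    have hπ : ∀ v, IsStrictTotalOrder (Fin 3) (π v) :=
      profSTO _ _ (mkO_sto hbc) (mkO_sto (fun h => hac h.symm))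
    have hca' : F π c a := unanimity π hπ c a (by
      intro v; fin_cases v
      · exact g2
      · exact f1)
    have hab' : F π a b := (tr1 π hπ a b hab f2 g3).mpr hD
    have hcb' : F π c b := (hF π hπ).trans c a b hca' hab'
    exact (tr1 π hπ c b (fun h => hbc h.symm) f3 g1).mp hcb'
  -- full spreading
  have spreadAll0 : ∀ a b c : Fin 3, a ≠ b → a ≠ c → b ≠ c → D0 a b →
      D0 a b ∧ D0 a c ∧ D0 c b ∧ D0 b c ∧ D0 c a ∧ D0 b a := by
    intro a b c hab hac hbc h
    have h2 : D0 a c := spread0L a b c hab hac hbc h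
    have h3 : D0 c b := spread0R a b c hab hac hbc h
    have h4 : D0 b c := spread0R a c b hac hab (fun h' => hbc h'.symm) h2
    have h5 : D0 c a := spread0L c b a (fun h' => hbc h'.symm) (fun h' => hac h'.symm)
      (fun h' => hab h'.symm) h3
    have h6 : D0 b a := spread0L b c a hbc (fun h' => hab h'.symm) (fun h' => hac h'.symm) h4
    exact ⟨h, h2, h3, h4, h5, h6⟩
  have spreadAll1 : ∀ a b c : Fin 3, a ≠ b → a ≠ c → b ≠ c → D1 a b →
      D1 a b ∧ D1 a c ∧ D1 c b ∧ D1 b c ∧ D1 c a ∧ D1 b a := by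
    intro a b c hab hac hbc h
    have h2 : D1 a c := spread1L a b c hab hac hbc h
    have h3 : D1 c b := spread1R a b c hab hac hbc h
    have h4 : D1 b c := spread1R a c b hac hab (fun h' => hbc h'.symm) h2
    have h5 : D1 c a := spread1L c b a (fun h' => hbc h'.symm) (fun h' => hac h'.symm)
      (fun h' => hab h'.symm) h3
    have h6 : D1 b a := spread1L b c a hbc (fun h' => hab h'.symm) (fun h' => hac h'.symm) h4
    exact ⟨h, h2, h3, h4, h5, h6⟩
  -- dictatorship from full decisiveness
  have dict0 : (∀ a b : Fin 3, a ≠ b → D0 a b) → ∀ π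
      (hπ : ∀ v, IsStrictTotalOrder (Fin 3) (π v)) (a b : Fin 3), π 0 a b → F π a b := by
    intro hall π hπ a b h0
    have hab : a ≠ b := by rintro rfl; exact (hπ 0).irrefl a h0
    by_cases h1 : π 1 a b
    · refine unanimity π hπ a b ?_
      intro v; fin_cases v
      · exact h0
      · exact h1
    · have h1' : π 1 b a := by
        rcases (or_iff_not_imp_left.2 fun h1 => or_iff_not_imp_right.2 fun h2 =>
          (hπ 1).trichotomous a b h1 h2 : π 1 a b ∨ a = b ∨ π 1 b a) with h | h | h
        · exact absurd h h1
        · exact absurd h hab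
        · exact h
      exact (tr0 π hπ a b hab h0 h1').mpr (hall a b hab)
  have dict1 : (∀ a b : Fin 3, a ≠ b → D1 a b) → ∀ π
      (hπ : ∀ v, IsStrictTotalOrder (Fin 3) (π v)) (a b : Fin 3), π 1 a b → F π a b := by
    intro hall π hπ a b h1
    have hab : a ≠ b := by rintro rfl; exact (hπ 1).irrefl a h1
    by_cases h0 : π 0 a b
    · refine unanimity π hπ a b ?_
      intro v; fin_cases v
      · exact h0
      · exact h1
    · have h0' : π 0 b a := by
        rcases (or_iff_not_imp_left.2 fun h1 => or_iff_not_imp_right.2 fun h2 =>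
          (hπ 0).trichotomous a b h1 h2 : π 0 a b ∨ a = b ∨ π 0 b a) with h | h | h
        · exact absurd h h0
        · exact absurd h hab
        · exact h
      exact (tr1 π hπ a b hab h1 h0').mpr (hall a b hab)
  -- final case split
  have h01 : (0 : Fin 3) ≠ 1 := by decide
  have h02 : (0 : Fin 3) ≠ 2 := by decide
  have h12 : (1 : Fin 3) ≠ 2 := by decide
  by_cases hd : D0 0 1
  · obtain ⟨k1, k2, k3, k4, k5, k6⟩ := spreadAll0 0 1 2 h01 h02 h12 hd
    refine ⟨0, dict0 ?_⟩
    intro a b hab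
    fin_cases a <;> fin_cases b <;>
      first
        | exact absurd rfl hab
        | exact k1 | exact k2 | exact k3 | exact k4 | exact k5 | exact k6
  · have hπ : ∀ v, IsStrictTotalOrder (Fin 3) ((![mkO 0 1, mkO 1 0] : Fin 2 → Fin 3 → Fin 3 → Prop) v) :=
      profSTO _ _ (mkO_sto h01) (mkO_sto h01.symm)
    have hd' : D1 1 0 := Ftot ![mkO 0 1, mkO 1 0] hπ 0 1 h01 hd
    obtain ⟨k1, k2, k3, k4, k5, k6⟩ := spreadAll1 1 0 2 h01.symm h12 h02 hd'
    refine ⟨1, dict1 ?_⟩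
    intro a b hab
    fin_cases a <;> fin_cases b <;>
      first
        | exact absurd rfl hab
        | exact k1 | exact k2 | exact k3 | exact k4 | exact k5 | exact k6
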